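/- Let X be a k-regular graph on v vertices with adjacency matrix A and least adjacency eigenvalue τ < 0. If S is an independent set in X, then |S| ≤ v/(1 - k/τ). -/

import Mathlib

open Matrix

set_option maxHeartbeats 1000000

theorem ratio_bound
    {V : Type*} [Fintype V] [DecidableEq V]
    (G : SimpleGraph V) [DecidableRel G.Adj]
    (k : ℕ) (hreg : G.IsRegularOfDegree k)
    (τ : ℝ) (hτneg : τ < 0)
    (hτ_eigen : ∃ y : V → ℝ, y ≠ 0 ∧ (G.adjMatrix ℝ).mulVec y = τ • y)
    (hτ_least : ∀ (μ : ℝ) (y : V → ℝ), y ≠ 0 →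
      (G.adjMatrix ℝ).mulVec y = μ • y → τ ≤ μ)
    (S : Finset V) (hS : ∀ u ∈ S, ∀ w ∈ S, ¬ G.Adj u w) :
    (S.card : ℝ) ≤ (Fintype.card V : ℝ) / (1 - (k : ℝ) / τ) := by
  classical
  set A := G.adjMatrix ℝ with hAdef
  -- V is nonempty
  obtain ⟨y, hy0, _⟩ := hτ_eigen
  have hV : Nonempty V := by
    by_contra h
    exact hy0 (funext fun v => ((not_nonempty_iff.mp h).false v).elim)
  have hn : (0 : ℝ) < (Fintype.card V : ℝ) := by
    exact_mod_cast Fintype.card_pos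
  set n : ℝ := (Fintype.card V : ℝ) with hndef
  set s : ℝ := (S.card : ℝ) with hsdef
  have hτ0 : τ ≠ 0 := ne_of_lt hτneg
  -- A is hermitian
  have hA : A.IsHermitian := by
    ext i j
    simp [Matrix.conjTranspose_apply, G.adj_comm i j, A]
  -- B = A - τ•1 is hermitian with nonnegative eigenvalues, hence PSD
  set B : Matrix V V ℝ := A - τ • 1 with hBdef
  have hB : B.IsHermitian := by
    refine hA.sub ?_
    unfold Matrix.IsHermitian
    simp
  have heig : ∀ i, 0 ≤ hB.eigenvalues i := by
    intro i
    obtain ⟨v, hvB, hvne⟩ : ∃ v : V → ℝ, B *ᵥ v = hB.eigenvalues i • v ∧ v ≠ 0 :=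
      ⟨_, hB.mulVec_eigenvectorBasis i, by
        simpa using hB.eigenvectorBasis.toBasis.ne_zero i⟩
    have hAv : A *ᵥ v = (hB.eigenvalues i + τ) • v := by
      have h1 : B *ᵥ v = A *ᵥ v - τ • v := by
        simp [hBdef, Matrix.sub_mulVec, Matrix.smul_mulVec]
      rw [h1] at hvB
      have h2 := sub_eq_iff_eq_add.mp hvB
      rw [h2]
      ext w
      simp [add_smul]
      ring
    have := hτ_least (hB.eigenvalues i + τ) v hvne hAv
    linarith
  have hPSD : B.PosSemidef := hB.posSemidef_iff_eigenvalues_nonneg.mpr heig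
  -- key quadratic form inequality
  have hquad : ∀ x : V → ℝ, τ * (x ⬝ᵥ x) ≤ x ⬝ᵥ (A *ᵥ x) := by
    intro x
    have := hPSD.dotProduct_mulVec_nonneg x
    simp only [B, Matrix.sub_mulVec, Matrix.smul_mulVec, Matrix.one_mulVec,
      dotProduct_sub, dotProduct_smul, star_trivial] at this
    rw [smul_eq_mul] at this
    linarith
  -- the test vector
  set χ : V → ℝ := fun v => if v ∈ S then 1 else 0 with hχdef
  set o : V → ℝ := fun _ => 1 with hodef
  set x : V → ℝ := n • χ - s • o with hxdef
  -- basic dot products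
  have hχχ : χ ⬝ᵥ χ = s := by
    simp [dotProduct, χ, ite_and, Finset.sum_ite_mem, s]
  have hoχ : o ⬝ᵥ χ = s := by
    simp [dotProduct, χ, o, s]
  have hχo : χ ⬝ᵥ o = s := by
    simp [dotProduct, χ, o, s]
  have hoo : o ⬝ᵥ o = n := by
    simp [dotProduct, o, n]
  have hAo : A *ᵥ o = (k : ℝ) • o := by
    ext v
    simp [A, o, hreg v]
  have hoA : o ᵥ* A = (k : ℝ) • o := by
    ext v
    simp [A, o, hreg v]
  have hχAχ : χ ⬝ᵥ (A *ᵥ χ) = 0 := by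
    rw [SimpleGraph.dotProduct_mulVec_adjMatrix]
    apply Finset.sum_eq_zero
    intro i _
    apply Finset.sum_eq_zero
    intro j _
    by_cases hij : G.Adj i j
    · simp only [hij, if_true, χ]
      by_cases hi : i ∈ S
      · by_cases hj : j ∈ S
        · exact absurd hij (hS i hi j hj)
        · simp [hi, hj]
      · simp [hi]
    · simp [hij]
  -- compute the two quadratic forms
  have e1 : o ⬝ᵥ (A *ᵥ χ) = k * s := by
    rw [Matrix.dotProduct_mulVec, hoA, smul_dotProduct, hoχ, smul_eq_mul]
  have e2 : χ ⬝ᵥ (A *ᵥ o) = k * s := by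
    rw [hAo, dotProduct_smul, hχo, smul_eq_mul]
  have e3 : o ⬝ᵥ (A *ᵥ o) = k * n := by
    rw [hAo, dotProduct_smul, hoo, smul_eq_mul]
  have hq1 : x ⬝ᵥ (A *ᵥ x) = -2 * n * s * (k * s) + s ^ 2 * (k * n) := by
    simp only [hxdef, Matrix.mulVec_sub, Matrix.mulVec_smul, dotProduct_sub,
      sub_dotProduct, dotProduct_smul, smul_dotProduct,
      hχAχ, e1, e2, e3, smul_eq_mul]
    ring
  have hq2 : x ⬝ᵥ x = n ^ 2 * s - 2 * n * s * s + s ^ 2 * n := by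
    simp only [hxdef, dotProduct_sub, sub_dotProduct,
      dotProduct_smul, smul_dotProduct, hχχ, hoχ, hχo, hoo, smul_eq_mul]
    ring
  have key := hquad x
  rw [hq1, hq2] at key
  have key2 : τ * s * n ≤ (τ - (k : ℝ)) * s ^ 2 := by
    nlinarith [key, hn, mul_pos hn hn]
  -- conclude
  have hd : 1 - (k : ℝ) / τ = (τ - (k : ℝ)) / τ := by field_simp
  rw [hd, div_div_eq_mul_div]
  have hτk : τ - (k : ℝ) < 0 := by
    have : (0 : ℝ) ≤ (k : ℝ) := Nat.cast_nonneg k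
    linarith
  rw [le_div_iff_of_neg hτk]
  have hs0 : (0 : ℝ) ≤ s := Nat.cast_nonneg _
  rcases eq_or_lt_of_le hs0 with h | h
  · nlinarith
  · nlinarith [key2, mul_pos h h]
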